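/- Let I ⊆ [0,1] be a set of real numbers satisfying the descending chain condition such that 1 is the only possible accumulation point of I (every accumulation point of I equals 1). Set J := (I ∪ {1})_+. Then J satisfies the descending chain condition, J_+ = J, 1 ∈ J, and 1 is the only possible accumulation point of J. -/

import Mathlib

open Finset in
/-- `I_+`: sums `∑ nᵢ aᵢ ≤ 1` with `aᵢ ∈ I`, `nᵢ` positive integers, together with `0`. -/
def Iplus (I : Set ℝ) : Set ℝ :=
  {x : ℝ | x ≤ 1 ∧ ∃ (r : ℕ), 0 < r ∧ ∃ (a : Fin r → ℝ) (n : Fin r → ℕ),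
    (∀ i, a i ∈ I) ∧ (∀ i, 0 < n i) ∧ x = ∑ i, (n i : ℝ) * a i} ∪ {0}

/-- `D(I) = {(m-1+f)/m ≤ 1 : m ∈ ℕ₊, f ∈ I_+}`. -/
def Dset (I : Set ℝ) : Set ℝ :=
  {x : ℝ | ∃ (m : ℕ) (f : ℝ), 0 < m ∧ f ∈ Iplus I ∧ x = ((m : ℝ) - 1 + f) / m} ∩ Set.Iic 1

/-- `D_c(I) = {(m-1+f+kc)/m ≤ 1 : m, k ∈ ℕ₊, f ∈ I_+}`. -/
def Dc (c : ℝ) (I : Set ℝ) : Set ℝ :=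
  {x : ℝ | ∃ (m k : ℕ) (f : ℝ), 0 < m ∧ 0 < k ∧ f ∈ Iplus I ∧
    x = ((m : ℝ) - 1 + f + (k : ℝ) * c) / m} ∩ Set.Iic 1

/-- A set of reals satisfies the descending chain condition (DCC) if it contains
no infinite strictly decreasing sequence. -/
def DCC (S : Set ℝ) : Prop := ¬ ∃ f : ℕ → ℝ, (∀ n, f n ∈ S) ∧ StrictAnti f

open Finset

lemma Iplus_subset_Icc {K : Set ℝ} (hK : K ⊆ Set.Icc 0 1) : Iplus K ⊆ Set.Icc 0 1 := by
  rintro x (⟨hx1, r, hr, a, n, ha, hn, rfl⟩ | hx)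
  · exact ⟨Finset.sum_nonneg fun i _ => mul_nonneg (Nat.cast_nonneg _) (hK (ha i)).1, hx1⟩
  · rw [Set.mem_singleton_iff] at hx
    subst hx; exact ⟨le_refl 0, zero_le_one⟩

lemma Iplus_zero_mem (K : Set ℝ) : (0 : ℝ) ∈ Iplus K := Or.inr rfl

lemma Iplus_single_mem {K : Set ℝ} {a : ℝ} (ha : a ∈ K) (ha1 : a ≤ 1) : a ∈ Iplus K := by
  left
  exact ⟨ha1, 1, one_pos, fun _ => a, fun _ => 1, fun _ => ha, fun _ => one_pos, by simp⟩

lemma Iplus_add_mem {K : Set ℝ} {x y : ℝ} (hx : x ∈ Iplus K) (hy : y ∈ Iplus K)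
    (hxy : x + y ≤ 1) : x + y ∈ Iplus K := by
  rcases hx with ⟨hx1, r, hr, a, n, ha, hn, rfl⟩ | hx
  · rcases hy with ⟨hy1, s, hs, b, m, hb, hm, rfl⟩ | hy
    · left
      refine ⟨hxy, r + s, by omega, Fin.append a b, Fin.append n m, ?_, ?_, ?_⟩
      · intro i
        refine Fin.addCases (motive := fun i => Fin.append a b i ∈ K) (fun j => ?_) (fun j => ?_) i
        · simpa only [Fin.append_left] using ha j
        · simpa only [Fin.append_right] using hb j
      · intro i
        refine Fin.addCases (motive := fun i => 0 < Fin.append n m i) (fun j => ?_) (fun j => ?_) i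
        · simpa only [Fin.append_left] using hn j
        · simpa only [Fin.append_right] using hm j
      · rw [Fin.sum_univ_add]
        simp [Fin.append_left, Fin.append_right]
    · rw [Set.mem_singleton_iff] at hy
      subst hy
      rw [add_zero] at hxy ⊢
      exact Or.inl ⟨hxy, r, hr, a, n, ha, hn, rfl⟩
  · rw [Set.mem_singleton_iff] at hx
    subst hx
    rw [zero_add] at hxy ⊢
    simpa using hy

lemma Iplus_nsmul_mem {K : Set ℝ} {x : ℝ} {k : ℕ} (hk : 0 < k) (hx : x ∈ Iplus K)
    (h1 : (k : ℝ) * x ≤ 1) : (k : ℝ) * x ∈ Iplus K := by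
  rcases hx with ⟨hx1, r, hr, a, n, ha, hn, rfl⟩ | hx
  · left
    refine ⟨h1, r, hr, a, fun i => k * n i, ha, fun i => Nat.mul_pos hk (hn i), ?_⟩
    rw [Finset.mul_sum]
    exact Finset.sum_congr rfl fun i _ => by push_cast; ring
  · rw [Set.mem_singleton_iff] at hx
    subst hx
    simpa using Iplus_zero_mem K

lemma Iplus_le_one {K : Set ℝ} {x : ℝ} (hx : x ∈ Iplus K) : x ≤ 1 := by
  rcases hx with ⟨hx1, _⟩ | hx
  · exact hx1
  · rw [Set.mem_singleton_iff] at hx; subst hx; exact zero_le_one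

lemma Iplus_idem {K : Set ℝ} (hK : K ⊆ Set.Icc 0 1) : Iplus (Iplus K) = Iplus K := by
  apply Set.Subset.antisymm
  · rintro x (⟨hx1, r, hr, b, n, hb, hn, rfl⟩ | hx)
    · have hnonneg : ∀ i, (0 : ℝ) ≤ (n i : ℝ) * b i := fun i =>
        mul_nonneg (Nat.cast_nonneg _) (Iplus_subset_Icc hK (hb i)).1
      have key : ∀ s : Finset (Fin r), (∑ i ∈ s, (n i : ℝ) * b i) ≤ 1 →
          (∑ i ∈ s, (n i : ℝ) * b i) ∈ Iplus K := by
        intro s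
        induction s using Finset.induction with
        | empty => intro _; simpa using Iplus_zero_mem K
        | @insert a s hni ih =>
          intro hle
          rw [Finset.sum_insert hni] at hle ⊢
          have hsumnn : (0 : ℝ) ≤ ∑ i ∈ s, (n i : ℝ) * b i :=
            Finset.sum_nonneg fun i _ => hnonneg i
          have h1 : (n a : ℝ) * b a ≤ 1 := le_trans (le_add_of_nonneg_right hsumnn) hle
          have h2 : (∑ i ∈ s, (n i : ℝ) * b i) ≤ 1 :=
            le_trans (le_add_of_nonneg_left (hnonneg a)) hle
          exact Iplus_add_mem (Iplus_nsmul_mem (hn a) (hb a) h1) (ih h2) hle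
      exact key Finset.univ hx1
    · rw [Set.mem_singleton_iff] at hx; subst hx; exact Iplus_zero_mem K
  · intro x hx
    exact Iplus_single_mem hx (Iplus_le_one hx)

lemma I_inter_Iic_finite {I : Set ℝ} (hI : I ⊆ Set.Icc 0 1)
    (hacc : ∀ x : ℝ, x ∈ closure (I \ {x}) → x = 1) {t : ℝ} (ht : t < 1) :
    (I ∩ Set.Iic t).Finite := by
  by_contra h
  have hinf : (I ∩ Set.Iic t).Infinite := h
  have hsub : I ∩ Set.Iic t ⊆ Set.Icc 0 t := fun x hx => ⟨(hI hx.1).1, hx.2⟩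
  obtain ⟨x, hxK, hx⟩ := hinf.exists_accPt_of_subset_isCompact isCompact_Icc hsub
  rw [accPt_principal_iff_clusterPt] at hx
  have hxc : x ∈ closure ((I ∩ Set.Iic t) \ {x}) := mem_closure_iff_clusterPt.mpr hx
  have hx1 : x = 1 :=
    hacc x (closure_mono (Set.diff_subset_diff_left Set.inter_subset_left) hxc)
  have := hxK.2
  linarith

/-- Key finiteness: below any level `t < 1`, `Iplus (I ∪ {1})` is finite. -/
lemma Iplus_inter_Iic_finite {I : Set ℝ} (hI : I ⊆ Set.Icc 0 1)
    (hacc : ∀ x : ℝ, x ∈ closure (I \ {x}) → x = 1) {t : ℝ} (ht : t < 1) :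
    (Iplus (I ∪ {1}) ∩ Set.Iic t).Finite := by
  classical
  have hfin : (I ∩ Set.Iic t).Finite := I_inter_Iic_finite hI hacc ht
  set F : Finset ℝ := hfin.toFinset.filter (fun a => 0 < a) with hF
  have hFpos : ∀ a ∈ F, 0 < a := fun a haF => (Finset.mem_filter.mp haF).2
  set δ : ℝ := if h : F.Nonempty then F.min' h else 1 with hδ
  have hδpos : 0 < δ := by
    rw [hδ]
    split
    · next h => exact hFpos _ (F.min'_mem h)
    · exact one_pos
  have hδle : ∀ a ∈ F, δ ≤ a := by
    intro a haF
    rw [hδ, dif_pos ⟨a, haF⟩]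
    exact F.min'_le a haF
  set N : ℕ := ⌈1 / δ⌉₊ with hN
  have hsub : Iplus (I ∪ {1}) ∩ Set.Iic t ⊆
      Set.range (fun c : F → Fin (N + 1) => ∑ b : F, ((c b : ℕ) : ℝ) * (b : ℝ)) := by
    rintro x ⟨hxJ, hxt⟩
    rw [Set.mem_Iic] at hxt
    rcases hxJ with ⟨hx1, r, hr, a, n, ha, hn, rfl⟩ | hx0
    ·
      have hann : ∀ i, 0 ≤ a i := by
        intro i
        rcases ha i with h | h
        · exact (hI h).1
        · rw [Set.mem_singleton_iff] at h; rw [h]; exact zero_le_one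
      have htermnn : ∀ i, (0 : ℝ) ≤ (n i : ℝ) * a i := fun i =>
        mul_nonneg (Nat.cast_nonneg _) (hann i)
      have hterm_le : ∀ i, (n i : ℝ) * a i ≤ t := by
        intro i
        calc (n i : ℝ) * a i ≤ ∑ j, (n j : ℝ) * a j :=
              Finset.single_le_sum (fun j _ => htermnn j) (Finset.mem_univ i)
          _ ≤ t := hxt
      have ha_le : ∀ i, a i ≤ t := by
        intro i
        have h1n : (1 : ℝ) ≤ (n i : ℝ) := by exact_mod_cast hn i
        calc a i ≤ (n i : ℝ) * a i := le_mul_of_one_le_left (hann i) h1n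
          _ ≤ t := hterm_le i
      have haI : ∀ i, a i ∈ I := by
        intro i
        rcases ha i with h | h
        · exact h
        · rw [Set.mem_singleton_iff] at h
          exfalso; have := ha_le i; rw [h] at this; linarith
      set s : Finset (Fin r) := Finset.univ.filter (fun i => 0 < a i) with hs
      have hmaps : ∀ i ∈ s, a i ∈ F := by
        intro i his
        rw [hF, Finset.mem_filter, Set.Finite.mem_toFinset]
        exact ⟨⟨haI i, ha_le i⟩, (Finset.mem_filter.mp his).2⟩
      -- m b = total multiplicity of value b
      set m : ℝ → ℕ := fun b => ∑ i ∈ s.filter (fun i => a i = b), n i with hm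
      have hsum_s : ∑ i ∈ s, (n i : ℝ) * a i = ∑ i, (n i : ℝ) * a i := by
        rw [hs]
        apply Finset.sum_filter_of_ne
        intro i _ hne
        rcases lt_or_eq_of_le (hann i) with h | h
        · exact h
        · exfalso; apply hne; rw [← h, mul_zero]
      have hfiber : ∑ b ∈ F, (m b : ℝ) * b = ∑ i ∈ s, (n i : ℝ) * a i := by
        rw [← Finset.sum_fiberwise_of_maps_to hmaps (fun i => (n i : ℝ) * a i)]
        apply Finset.sum_congr rfl
        intro b _
        rw [hm]
        push_cast
        rw [Finset.sum_mul]
        apply Finset.sum_congr rfl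
        intro i hi
        rw [(Finset.mem_filter.mp hi).2]
      have hmle : ∀ b ∈ F, m b ≤ N := by
        intro b hbF
        have hb_pos := hFpos b hbF
        have h1 : (m b : ℝ) * b ≤ ∑ i ∈ s, (n i : ℝ) * a i := by
          rw [hm]
          push_cast
          rw [Finset.sum_mul]
          calc (∑ i ∈ s.filter (fun i => a i = b), (n i : ℝ) * b)
              = ∑ i ∈ s.filter (fun i => a i = b), (n i : ℝ) * a i := by
                apply Finset.sum_congr rfl
                intro i hi
                rw [(Finset.mem_filter.mp hi).2]
            _ ≤ ∑ i ∈ s, (n i : ℝ) * a i :=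
                Finset.sum_le_sum_of_subset_of_nonneg (Finset.filter_subset _ _)
                  (fun i _ _ => htermnn i)
        have h2 : (m b : ℝ) * δ ≤ 1 := by
          have : (m b : ℝ) * δ ≤ (m b : ℝ) * b :=
            mul_le_mul_of_nonneg_left (hδle b hbF) (Nat.cast_nonneg _)
          have h3 : ∑ i ∈ s, (n i : ℝ) * a i ≤ t := hsum_s ▸ hxt
          linarith
        have h4 : (m b : ℝ) ≤ 1 / δ := by
          rw [le_div_iff₀ hδpos]; exact h2
        have h5 : (m b : ℝ) ≤ (N : ℝ) := le_trans h4 (Nat.le_ceil _)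
        exact_mod_cast h5
      refine ⟨fun b => ⟨m b, by have := hmle b b.2; omega⟩, ?_⟩
      simp only
      calc ∑ b : F, ((m (b : ℝ)) : ℝ) * (b : ℝ)
          = ∑ b ∈ F, (m b : ℝ) * b := Finset.sum_coe_sort F (fun b => (m b : ℝ) * b)
        _ = ∑ i ∈ s, (n i : ℝ) * a i := hfiber
        _ = ∑ i, (n i : ℝ) * a i := hsum_s
    · rw [Set.mem_singleton_iff] at hx0
      refine ⟨fun _ => 0, ?_⟩
      simp [hx0]
  exact Set.Finite.subset (Set.finite_range _) hsub

theorem enlarge_coefficient_set (I : Set ℝ) (hI : I ⊆ Set.Icc 0 1) (hDCC : DCC I)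
    (hacc : ∀ x : ℝ, x ∈ closure (I \ {x}) → x = 1) :
    DCC (Iplus (I ∪ {1})) ∧ Iplus (Iplus (I ∪ {1})) = Iplus (I ∪ {1}) ∧
      (1 : ℝ) ∈ Iplus (I ∪ {1}) ∧
      ∀ x : ℝ, x ∈ closure (Iplus (I ∪ {1}) \ {x}) → x = 1 := by
  have hK : I ∪ {1} ⊆ Set.Icc 0 1 := by
    rintro a (h | h)
    · exact hI h
    · rw [Set.mem_singleton_iff] at h; rw [h]; exact ⟨zero_le_one, le_refl 1⟩
  have hJ : Iplus (I ∪ {1}) ⊆ Set.Icc 0 1 := Iplus_subset_Icc hK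
  refine ⟨?_, Iplus_idem hK, ?_, ?_⟩
  · -- DCC
    rintro ⟨f, hf, hanti⟩
    have hf1lt : f 1 < 1 := lt_of_lt_of_le (hanti (by norm_num : (0 : ℕ) < 1)) (hJ (hf 0)).2
    have hfin := Iplus_inter_Iic_finite hI hacc hf1lt
    have hinj : Function.Injective (fun k : ℕ => f (k + 1)) := by
      intro a b hab
      have := hanti.injective hab
      omega
    have hmem : ∀ k : ℕ, f (k + 1) ∈ Iplus (I ∪ {1}) ∩ Set.Iic (f 1) := by
      intro k
      exact ⟨hf (k + 1), hanti.antitone (by omega)⟩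
    exact Set.infinite_of_injective_forall_mem hinj hmem hfin
  · -- 1 ∈ J
    exact Iplus_single_mem (Or.inr rfl) (le_refl 1)
  · -- accumulation points
    intro x hx
    by_contra hne
    have hxI : x ∈ Set.Icc 0 1 := by
      have hcl : closure (Iplus (I ∪ {1}) \ {x}) ⊆ Set.Icc 0 1 :=
        closure_minimal (Set.diff_subset.trans hJ) isClosed_Icc
      exact hcl hx
    have hxlt : x < 1 := lt_of_le_of_ne hxI.2 hne
    set t : ℝ := (1 + x) / 2 with hti
    have hxt : x < t := by rw [hti]; linarith
    have ht1 : t < 1 := by rw [hti]; linarith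
    have hfin := Iplus_inter_Iic_finite hI hacc ht1
    have hsplit : Iplus (I ∪ {1}) \ {x} ⊆
        ((Iplus (I ∪ {1}) ∩ Set.Iic t) \ {x}) ∪ Set.Ici t := by
      rintro y ⟨hy, hyx⟩
      rcases le_total y t with h | h
      · exact Or.inl ⟨⟨hy, h⟩, hyx⟩
      · exact Or.inr h
    have hxcl := closure_mono hsplit hx
    rw [closure_union] at hxcl
    rcases hxcl with h | h
    · have hcl : IsClosed ((Iplus (I ∪ {1}) ∩ Set.Iic t) \ {x}) :=
        (hfin.diff (t := {x})).isClosed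
      rw [hcl.closure_eq] at h
      exact h.2 rfl
    · rw [isClosed_Ici.closure_eq] at h
      rw [Set.mem_Ici] at h
      linarith
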